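/- Let k be a field of characteristic zero, A = k[x_1,…,x_n], and f ∈ A with finite Milnor number. Then a solution of the Maurer–Cartan equation in 𝔪 ⊗ 𝔤¹ (governing noncommutative unfoldings of f over a local Artinian base (R,𝔪)) is given by any pair (p, T) with p ∈ 𝔪 ⊗ A and T ∈ 𝔪 ⊗ Λ³_A T_A satisfying [[f−p, T], [f−p, T]] = 0, via w = p∂_e + [f−p, T]. -/

import Mathlib

open MvPolynomial

/- Polyvector fields on affine `n`-space in coordinates.  Since `T_A = Der_k(A)` is free on
`∂₁, …, ∂ₙ`, a `p`-vector field is given by its alternating array of coefficients.  The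
Schouten–Nijenhuis bracket is given by the classical coordinate formulas below. -/

variable {k : Type*} [CommRing k] {n : ℕ}

/-- The coefficients of the Schouten bracket `[g, S]` (contraction of the bivector `S` with
`dg`): `[g,S]_j = ∑ᵢ S i j ∂ᵢ g`.  It is a vector field. -/
noncomputable def schFnBiv (g : MvPolynomial (Fin n) k)
    (S : Fin n → Fin n → MvPolynomial (Fin n) k) : Fin n → MvPolynomial (Fin n) k :=
  fun j => ∑ i, S i j * pderiv i g

/-- The coefficients of the Schouten bracket `[g, T]` of a function with a trivector `T`
(contraction with `dg`): it is a bivector, `[g,T]_{jk} = ∑ᵢ T i j k ∂ᵢ g`. -/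
noncomputable def schFnTriv (g : MvPolynomial (Fin n) k)
    (T : Fin n → Fin n → Fin n → MvPolynomial (Fin n) k) :
    Fin n → Fin n → MvPolynomial (Fin n) k :=
  fun j l => ∑ i, T i j l * pderiv i g

/-- The coefficients of the Schouten bracket `[S, S]` of a bivector with itself; it is a
trivector with components `[S,S]^{ijk} = 2 ∑ₗ (S l i ∂ₗ S j k + S l j ∂ₗ S k i + S l k ∂ₗ S i j)`
(we drop the overall factor 2, harmless in characteristic zero). -/
noncomputable def schBivBiv (S : Fin n → Fin n → MvPolynomial (Fin n) k) :
    Fin n → Fin n → Fin n → MvPolynomial (Fin n) k :=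
  fun i j l => ∑ m, (S m i * pderiv m (S j l) + S m j * pderiv m (S l i) +
    S m l * pderiv m (S i j))

/-- A trivector array is alternating. -/
def IsAltTriv (T : Fin n → Fin n → Fin n → MvPolynomial (Fin n) k) : Prop :=
  ∀ i j l, T i j l = - T j i l ∧ T i j l = - T i l j

/-- Let `k` be a field of characteristic zero, `A = k[x₁,…,xₙ]`, `f ∈ A`
with finite Milnor number, and `(R,𝔪)` a local Artinian `k`-algebra.  A solution of the
Maurer–Cartan equation in `𝔪 ⊗ 𝔤¹` (governing noncommutative unfoldings of `f`) is given by
any pair `(p, T)` with `p ∈ 𝔪 ⊗ A` and `T ∈ 𝔪 ⊗ Λ³_A T_A` satisfying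
`[[f−p, T], [f−p, T]] = 0`, via `w = p∂_e + S` with `S := [f−p, T]`; i.e. `w` satisfies
`[f−p, S] = 0` and `[S, S] = 0` (the componentwise form of the Maurer–Cartan equation). -/
theorem unfolding_stmt13 (K : Type*) [Field K] [CharZero K] (m : ℕ)
    (f : MvPolynomial (Fin m) K)
    (hμ : FiniteDimensional K
      (MvPolynomial (Fin m) K ⧸
        Ideal.span (Set.range fun i : Fin m => pderiv i f)))
    (R : Type*) [CommRing R] [Algebra K R] [IsArtinianRing R] [IsLocalRing R]
    (p : MvPolynomial (Fin m) R)
    (hp : ∀ c, p.coeff c ∈ IsLocalRing.maximalIdeal R)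
    (T : Fin m → Fin m → Fin m → MvPolynomial (Fin m) R) (hT : IsAltTriv T)
    (hTm : ∀ i j l c, (T i j l).coeff c ∈ IsLocalRing.maximalIdeal R)
    (hMC : ∀ i j l,
      schBivBiv (schFnTriv (MvPolynomial.map (algebraMap K R) f - p) T) i j l = 0) :
    (∀ l, schFnBiv (MvPolynomial.map (algebraMap K R) f - p)
        (schFnTriv (MvPolynomial.map (algebraMap K R) f - p) T) l = 0) ∧
    (∀ i j l,
      schBivBiv (schFnTriv (MvPolynomial.map (algebraMap K R) f - p) T) i j l = 0) := by
  refine ⟨fun l => ?_, hMC⟩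
  set g := MvPolynomial.map (algebraMap K R) f - p with hg
  unfold schFnBiv schFnTriv
  set Ssum := ∑ i, (∑ i', T i' i l * pderiv i' g) * pderiv i g with hS
  have hswap : Ssum = ∑ i', ∑ i, T i' i l * pderiv i' g * pderiv i g := by
    rw [hS]; simp_rw [Finset.sum_mul]; exact Finset.sum_comm
  have hneg2 : (∑ i' : Fin m, ∑ i : Fin m, T i' i l * pderiv i' g * pderiv i g)
      = - ∑ i' : Fin m, ∑ i : Fin m, T i i' l * pderiv i g * pderiv i' g := by
    rw [← Finset.sum_neg_distrib]
    refine Finset.sum_congr rfl fun i' _ => ?_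
    rw [← Finset.sum_neg_distrib]
    exact Finset.sum_congr rfl fun i _ => by rw [(hT i' i l).1]; ring
  have hneg : Ssum = - Ssum := by
    conv_lhs => rw [hswap, hneg2]
    rw [hswap]
    refine congrArg Neg.neg ?_
    exact Finset.sum_comm
  have h2 : (2 : MvPolynomial (Fin m) R) * Ssum = 0 := by
    rw [two_mul]
    nth_rewrite 2 [hneg]
    ring
  haveI : Algebra ℚ R := RingHom.toAlgebra ((algebraMap K R).comp (algebraMap ℚ K))
  have hu : IsUnit (2 : MvPolynomial (Fin m) R) := by
    have hC : (MvPolynomial.C (algebraMap ℚ R 2) : MvPolynomial (Fin m) R) = 2 := by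
      rw [map_ofNat, map_ofNat]
    rw [← hC]
    exact ((isUnit_iff_ne_zero.2 (two_ne_zero (α := ℚ))).map (algebraMap ℚ R)).map
      MvPolynomial.C
  exact (hu.mul_right_eq_zero).1 h2
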